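/- The algebra A = ℂ[y₁,…,yₙ]/(y₁²,…,yₙ²) has the strong Lefschetz property with Lefschetz element L = y₁ + y₂ + ⋯ + yₙ; that is, for each 0 ≤ i ≤ ⌊n/2⌋ the map ×L^{n−2i}: Aᵢ → A_{n−i} is bijective. -/

import Mathlib

open MvPolynomial

/-- The apolarity action: `P`, viewed as a constant-coefficient differential operator,
applied to the polynomial `F`. -/
noncomputable def apolar {σ : Type*} [DecidableEq σ] (P F : MvPolynomial σ ℂ) :
    MvPolynomial σ ℂ :=
  ∑ d ∈ P.support, ∑ e ∈ F.support,
    monomial (e - d)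
      (P.coeff d * F.coeff e * ∏ i ∈ d.support ∪ e.support, ((e i).descFactorial (d i) : ℂ))

/-- The annihilator `Ann_R(F) = {P : P(∂)F = 0}` as a set. -/
def annSet {σ : Type*} [DecidableEq σ] (F : MvPolynomial σ ℂ) : Set (MvPolynomial σ ℂ) :=
  {P | apolar P F = 0}

/-- The degree-`i` graded piece of the quotient `R ⧸ I`: the image of the homogeneous
degree-`i` polynomials. -/
noncomputable def quotDeg {σ : Type*} (I : Ideal (MvPolynomial σ ℂ)) (i : ℕ) :
    Submodule ℂ (MvPolynomial σ ℂ ⧸ I) :=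
  (homogeneousSubmodule σ ℂ i).map (Ideal.Quotient.mkₐ ℂ I).toLinearMap

/-- `×L^(c-2i) : A_i → A_(c-i)` is bijective, for `A = R ⧸ I`. -/
def lefschetzAt {σ : Type*} (I : Ideal (MvPolynomial σ ℂ)) (c : ℕ) (L : MvPolynomial σ ℂ)
    (i : ℕ) : Prop :=
  (∀ x ∈ quotDeg I i, Ideal.Quotient.mk I L ^ (c - 2 * i) * x = 0 → x = 0) ∧
  (∀ y ∈ quotDeg I (c - i), ∃ x ∈ quotDeg I i, Ideal.Quotient.mk I L ^ (c - 2 * i) * x = y)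

open Finset

variable {n : ℕ}

abbrev Mn (n : ℕ) := Finset (Fin n) → ℂ

noncomputable def Uop (n : ℕ) : Mn n →ₗ[ℂ] Mn n where
  toFun f S := ∑ j ∈ S, f (S.erase j)
  map_add' f g := by funext S; simp [Finset.sum_add_distrib]
  map_smul' c f := by funext S; simp [Finset.mul_sum]

noncomputable def Dop (n : ℕ) : Mn n →ₗ[ℂ] Mn n where
  toFun f S := ∑ j ∈ Sᶜ, f (insert j S)
  map_add' f g := by funext S; simp [Finset.sum_add_distrib]
  map_smul' c f := by funext S; simp [Finset.mul_sum]

lemma Uop_apply (f : Mn n) (S : Finset (Fin n)) : Uop n f S = ∑ j ∈ S, f (S.erase j) := rfl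
lemma Dop_apply (f : Mn n) (S : Finset (Fin n)) : Dop n f S = ∑ j ∈ Sᶜ, f (insert j S) := rfl

/-- Generic reindexing between pairs (S, j∈S) and (T, j∉T). -/
lemma reindex {A : Type*} [AddCommMonoid A] (F : Finset (Fin n) → Fin n → A) :
    ∑ S : Finset (Fin n), ∑ j ∈ S, F (S.erase j) j
      = ∑ T : Finset (Fin n), ∑ j ∈ Tᶜ, F T j := by
  rw [Finset.sum_sigma', Finset.sum_sigma']
  apply Finset.sum_bij' (fun p _ => (⟨p.1.erase p.2, p.2⟩ : Σ _ : Finset (Fin n), Fin n))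
    (fun p _ => (⟨insert p.2 p.1, p.2⟩ : Σ _ : Finset (Fin n), Fin n))
  · rintro ⟨S, j⟩ h
    simp only [Finset.mem_sigma, Finset.mem_univ, true_and] at h ⊢
    simp [Finset.mem_compl]
  · rintro ⟨T, j⟩ h
    simp only [Finset.mem_sigma, Finset.mem_univ, true_and, Finset.mem_compl] at h ⊢
    simp
  · rintro ⟨S, j⟩ h
    simp only [Finset.mem_sigma, Finset.mem_univ, true_and] at h
    simp [Finset.insert_erase h]
  · rintro ⟨T, j⟩ h
    simp only [Finset.mem_sigma, Finset.mem_univ, true_and, Finset.mem_compl] at h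
    simp [Finset.erase_insert h]
  · rintro ⟨S, j⟩ h; rfl

lemma comm_pointwise (f : Mn n) (S : Finset (Fin n)) :
    Dop n (Uop n f) S = Uop n (Dop n f) S + ((n : ℂ) - 2 * S.card) * f S := by
  have hDU : Dop n (Uop n f) S = ∑ j ∈ Sᶜ, (f S + ∑ i ∈ S, f (insert j (S.erase i))) := by
    rw [Dop_apply]
    refine Finset.sum_congr rfl fun j hj => ?_
    rw [Finset.mem_compl] at hj
    rw [Uop_apply, Finset.sum_insert hj, Finset.erase_insert hj]
    congr 1
    refine Finset.sum_congr rfl fun i hi => ?_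
    congr 1
    rw [Finset.erase_insert_of_ne]
    exact fun hji => hj (hji ▸ hi)
  have hUD : Uop n (Dop n f) S = ∑ i ∈ S, (f S + ∑ j ∈ Sᶜ, f (insert j (S.erase i))) := by
    rw [Uop_apply]
    refine Finset.sum_congr rfl fun i hi => ?_
    rw [Dop_apply, Finset.compl_erase, Finset.sum_insert (by simp [hi]), Finset.insert_erase hi]
  have hcard : S.card ≤ n := by
    simpa using Finset.card_le_univ S
  rw [hDU, hUD, Finset.sum_add_distrib, Finset.sum_add_distrib, Finset.sum_const,
    Finset.sum_const, Finset.sum_comm, Finset.card_compl, Fintype.card_fin, nsmul_eq_mul,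
    nsmul_eq_mul, Nat.cast_sub hcard]
  ring


noncomputable def lvl (n k : ℕ) : Submodule ℂ (Mn n) where
  carrier := {f | ∀ S : Finset (Fin n), S.card ≠ k → f S = 0}
  add_mem' hf hg S hS := by simp [Pi.add_apply, hf S hS, hg S hS]
  zero_mem' S hS := rfl
  smul_mem' c f hf S hS := by simp [Pi.smul_apply, hf S hS]

lemma mem_lvl {f : Mn n} {k : ℕ} : f ∈ lvl n k ↔ ∀ S : Finset (Fin n), S.card ≠ k → f S = 0 :=
  Iff.rfl

lemma lvl_U {f : Mn n} {k : ℕ} (hf : f ∈ lvl n k) : Uop n f ∈ lvl n (k + 1) := by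
  intro S hS
  rw [Uop_apply]
  refine Finset.sum_eq_zero fun j hj => hf _ ?_
  rw [Finset.card_erase_of_mem hj]
  intro h
  apply hS
  have : 1 ≤ S.card := Finset.card_pos.mpr ⟨j, hj⟩
  omega

lemma lvl_D {f : Mn n} {k : ℕ} (hf : f ∈ lvl n (k + 1)) : Dop n f ∈ lvl n k := by
  intro S hS
  rw [Dop_apply]
  refine Finset.sum_eq_zero fun j hj => hf _ ?_
  rw [Finset.mem_compl] at hj
  rw [Finset.card_insert_of_notMem hj]
  omega

lemma lvl_D_zero {f : Mn n} (hf : f ∈ lvl n 0) : Dop n f = 0 := by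
  funext S
  rw [Dop_apply]
  refine Finset.sum_eq_zero fun j hj => hf _ ?_
  simp

lemma U_pow_succ (m : ℕ) (f : Mn n) :
    (Uop n ^ (m + 1)) f = Uop n ((Uop n ^ m) f) := by
  rw [pow_succ']; rfl

lemma lvl_pow_U {f : Mn n} {k : ℕ} (hf : f ∈ lvl n k) (m : ℕ) :
    (Uop n ^ m) f ∈ lvl n (k + m) := by
  induction m with
  | zero => simpa using hf
  | succ m ih =>
      rw [U_pow_succ]
      exact (add_assoc k m 1) ▸ lvl_U ih

lemma lvl_high {f : Mn n} {k : ℕ} (hf : f ∈ lvl n k) (hk : n < k) : f = 0 := by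
  funext S
  refine hf S ?_
  have : S.card ≤ n := by simpa using Finset.card_le_univ S
  omega

lemma comm_on_lvl {f : Mn n} {k : ℕ} (hf : f ∈ lvl n k) :
    Dop n (Uop n f) = Uop n (Dop n f) + ((n : ℂ) - 2 * k) • f := by
  funext S
  rw [Pi.add_apply, Pi.smul_apply, comm_pointwise, smul_eq_mul]
  rcases eq_or_ne S.card k with h | h
  · rw [h]
  · rw [hf S h, mul_zero, mul_zero]

/-- `D U^{m+1} f = U^{m+1} D f + (m+1)(n - 2k - m) U^m f` on level `k`. -/
lemma powD {k : ℕ} (m : ℕ) {f : Mn n} (hf : f ∈ lvl n k) :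
    Dop n ((Uop n ^ (m + 1)) f) = (Uop n ^ (m + 1)) (Dop n f)
      + (((m : ℂ) + 1) * ((n : ℂ) - 2 * k - m)) • (Uop n ^ m) f := by
  induction m with
  | zero =>
      simpa [pow_one] using comm_on_lvl hf
  | succ m ih =>
      have hlev : (Uop n ^ (m + 1)) f ∈ lvl n (k + (m + 1)) := lvl_pow_U hf (m + 1)
      rw [U_pow_succ (m+1) f, comm_on_lvl hlev, ih, map_add, map_smul,
        ← U_pow_succ (m+1) (Dop n f), ← U_pow_succ m f, add_assoc, ← add_smul]
      congr 2
      push_cast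
      ring

/-- Primitive injectivity: a primitive vector at level `k` killed by `U^m`, `m ≤ n - 2k`,
is zero. -/
lemma prim_inj {k r : ℕ} (hn : n = 2 * k + r) {p : Mn n} (hp : p ∈ lvl n k)
    (hDp : Dop n p = 0) : ∀ m ≤ r, (Uop n ^ m) p = 0 → p = 0 := by
  intro m
  induction m with
  | zero => intro _ h; simpa using h
  | succ m ih =>
      intro hm h
      refine ih (by omega) ?_
      have := powD m hp
      rw [h, hDp] at this
      simp only [map_zero, zero_add] at this
      have hc : ((m : ℂ) + 1) * ((n : ℂ) - 2 * k - m) ≠ 0 := by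
        have h1 : ((m : ℂ) + 1) ≠ 0 := by
          exact Nat.cast_add_one_ne_zero m
        have h2 : ((n : ℂ) - 2 * k - m) ≠ 0 := by
          have : ((n : ℂ) - 2 * k - m) = ((r - m : ℕ) : ℂ) := by
            subst hn; push_cast [Nat.cast_sub (by omega : m ≤ r)]; ring
          rw [this]
          exact Nat.cast_ne_zero.mpr (by omega)
        exact mul_ne_zero h1 h2
      have := (smul_eq_zero.mp this.symm).resolve_left hc
      exact this

/-- Primitive nilpotency: `U^{r+1} p = 0` for a primitive vector at level `k`,
 `n = 2k + r`. -/
lemma prim_nilp {k r : ℕ} (hn : n = 2 * k + r) {p : Mn n} (hp : p ∈ lvl n k)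
    (hDp : Dop n p = 0) : (Uop n ^ (r + 1)) p = 0 := by
  have key : ∀ s, (Uop n ^ (r + 1 + s)) p = 0 → (Uop n ^ (r + 1)) p = 0 := by
    intro s
    induction s with
    | zero => exact fun h => h
    | succ s ih =>
        intro h
        refine ih ?_
        have := powD (r + s + 1) hp
        have harr : r + s + 1 + 1 = r + 1 + (s + 1) := by ring
        rw [harr, h, hDp] at this
        simp only [map_zero, zero_add] at this
        have hc : (((r + s + 1 : ℕ) : ℂ) + 1) * ((n : ℂ) - 2 * k - (r + s + 1 : ℕ)) ≠ 0 := by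
          refine mul_ne_zero ?_ ?_
          · exact Nat.cast_add_one_ne_zero (r + s + 1)
          · have : ((n : ℂ) - 2 * k - (r + s + 1 : ℕ)) = -(((s + 1 : ℕ)) : ℂ) := by
              subst hn; push_cast; ring
            rw [this, neg_ne_zero]
            exact Nat.cast_ne_zero.mpr (by omega)
        have h2 := (smul_eq_zero.mp this.symm).resolve_left hc
        have : r + s + 1 = r + 1 + s := by ring
        rwa [this] at h2
  refine key k ?_
  have : (Uop n ^ (r + 1 + k)) p ∈ lvl n (k + (r + 1 + k)) := lvl_pow_U hp _
  exact lvl_high this (by omega)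

noncomputable def Bf (f g : Mn n) : ℂ := ∑ S : Finset (Fin n), (starRingEnd ℂ) (f S) * g S

lemma Bf_self (f : Mn n) : Bf f f = ((∑ S : Finset (Fin n), Complex.normSq (f S) : ℝ) : ℂ) := by
  rw [Bf]
  push_cast
  refine Finset.sum_congr rfl fun S _ => ?_
  rw [Complex.normSq_eq_conj_mul_self]

lemma Bf_self_eq_zero {f : Mn n} (h : Bf f f = 0) : f = 0 := by
  rw [Bf_self] at h
  have h0 : (∑ S : Finset (Fin n), Complex.normSq (f S) : ℝ) = 0 := by exact_mod_cast h
  funext S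
  have := (Finset.sum_eq_zero_iff_of_nonneg
    (fun S _ => Complex.normSq_nonneg (f S))).mp h0 S (Finset.mem_univ S)
  exact Complex.normSq_eq_zero.mp this

lemma Bf_adjoint (f g : Mn n) : Bf (Uop n f) g = Bf f (Dop n g) := by
  rw [Bf, Bf]
  have lhs : ∀ S : Finset (Fin n), (starRingEnd ℂ) (Uop n f S) * g S
      = ∑ j ∈ S, (starRingEnd ℂ) (f (S.erase j)) * g S := by
    intro S
    rw [Uop_apply, map_sum, Finset.sum_mul]
  have rhs : ∀ T : Finset (Fin n), (starRingEnd ℂ) (f T) * Dop n g T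
      = ∑ j ∈ Tᶜ, (starRingEnd ℂ) (f T) * g (insert j T) := by
    intro T
    rw [Dop_apply, Finset.mul_sum]
  simp only [lhs, rhs]
  have := reindex (n := n) (fun T j => (starRingEnd ℂ) (f T) * g (insert j T))
  rw [← this]
  refine Finset.sum_congr rfl fun S _ => Finset.sum_congr rfl fun j hj => ?_
  rw [Finset.insert_erase hj]

lemma Bf_smul_left (c : ℂ) (f g : Mn n) : Bf (c • f) g = (starRingEnd ℂ) c * Bf f g := by
  rw [Bf, Bf, Finset.mul_sum]
  refine Finset.sum_congr rfl fun S _ => ?_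
  simp [mul_assoc]

/-- `DU` is injective on level `j` when `2j < n`. -/
lemma DU_inj {j : ℕ} (hj : 2 * j < n) {f : Mn n} (hf : f ∈ lvl n j)
    (h : Dop n (Uop n f) = 0) : f = 0 := by
  have hcomm := comm_on_lvl hf
  rw [h] at hcomm
  have hU : Uop n (Dop n f) = -(((n : ℂ) - 2 * j) • f) := by
    rw [eq_comm, neg_eq_iff_add_eq_zero, add_comm]
    exact hcomm.symm
  have key : Bf (Uop n (Dop n f)) f = Bf (Dop n f) (Dop n f) := Bf_adjoint (Dop n f) f
  rw [hU] at key
  have : -(((n : ℂ) - 2 * j)) * Bf f f = Bf (Dop n f) (Dop n f) := by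
    rw [← key, ← neg_smul, Bf_smul_left, map_neg]
    congr 2
    have : ((n : ℂ) - 2 * j) = (((n - 2 * j : ℕ)) : ℂ) := by
      push_cast [Nat.cast_sub (by omega : 2 * j ≤ n)]; ring
    rw [this, Complex.conj_natCast]
  rw [Bf_self, Bf_self] at this
  have hc : ((n : ℂ) - 2 * j) = (((n - 2 * j : ℕ)) : ℂ) := by
    push_cast [Nat.cast_sub (by omega : 2 * j ≤ n)]; ring
  rw [hc] at this
  have hre : -(((n - 2 * j : ℕ) : ℝ)) * (∑ S : Finset (Fin n), Complex.normSq (f S) : ℝ)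
      = (∑ S : Finset (Fin n), Complex.normSq (Dop n f S) : ℝ) := by
    exact_mod_cast this
  have h1 : (0 : ℝ) ≤ ∑ S : Finset (Fin n), Complex.normSq (f S) :=
    Finset.sum_nonneg fun S _ => Complex.normSq_nonneg _
  have h2 : (0 : ℝ) ≤ ∑ S : Finset (Fin n), Complex.normSq (Dop n f S) :=
    Finset.sum_nonneg fun S _ => Complex.normSq_nonneg _
  have h3 : (0 : ℝ) < ((n - 2 * j : ℕ) : ℝ) := by
    exact_mod_cast (by omega : 0 < n - 2 * j)
  have h4 : (∑ S : Finset (Fin n), Complex.normSq (f S) : ℝ) = 0 := by nlinarith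
  refine Bf_self_eq_zero ?_
  rw [Bf_self, h4, Complex.ofReal_zero]

lemma DU_mapsTo {j : ℕ} : ∀ f ∈ lvl n j, Dop n (Uop n f) ∈ lvl n j :=
  fun _ hf => lvl_D (lvl_U hf)

/-- Lefschetz decomposition step: every `f` at level `k+1` (with `2k < n`) differs from
a primitive vector by something in `U (lvl k)`. -/
lemma decompose {k : ℕ} (hk : 2 * k < n) {f : Mn n} (hf : f ∈ lvl n (k + 1)) :
    ∃ g ∈ lvl n k, Dop n (f - Uop n g) = 0 := by
  let e : lvl n k →ₗ[ℂ] lvl n k :=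
    LinearMap.restrict (Dop n ∘ₗ Uop n) (p := lvl n k) (q := lvl n k) DU_mapsTo
  have hinj : Function.Injective e := by
    intro x y hxy
    have hxy' : Dop n (Uop n ((x : Mn n) - y)) = 0 := by
      have : (e x : Mn n) = e y := congrArg _ hxy
      simp only [e, LinearMap.restrict_apply, LinearMap.comp_apply] at this
      rw [map_sub, map_sub, this, sub_self]
    have := DU_inj hk (sub_mem x.2 y.2) hxy'
    exact Subtype.ext (sub_eq_zero.mp this)
  have hsurj : Function.Surjective e := by
    exact (LinearMap.injective_iff_surjective_of_finrank_eq_finrank rfl).mp hinj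
  obtain ⟨g, hg⟩ := hsurj ⟨Dop n f, lvl_D hf⟩
  refine ⟨g, g.2, ?_⟩
  have : Dop n (Uop n (g : Mn n)) = Dop n f := by
    have := congrArg (fun x : lvl n k => (x : Mn n)) hg
    simpa [e, LinearMap.restrict_apply] using this
  rw [map_sub, this, sub_self]

/-- Main injectivity: `U^r` is injective on level `k` when `n = 2k + r`. -/
lemma main_inj : ∀ k r, n = 2 * k + r → ∀ f ∈ lvl n k, (Uop n ^ r) f = 0 → f = 0 := by
  intro k
  induction k with
  | zero =>
      intro r hn f hf h
      exact prim_inj hn hf (lvl_D_zero hf) r le_rfl h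
  | succ k ih =>
      intro r hn f hf h
      obtain ⟨g, hg, hprim⟩ := decompose (by omega) hf
      set p := f - Uop n g with hp
      have hpl : p ∈ lvl n (k + 1) := sub_mem hf (lvl_U hg)
      have hfp : f = p + Uop n g := by rw [hp]; ring
      have hU1 : (Uop n ^ (r + 1)) f = 0 := by
        rw [U_pow_succ]  -- (U^(r+1)) f = U ((U^r) f)? no: U_pow_succ : U^(m+1) f = U (U^m f)
        rw [h, map_zero]
      have hUp : (Uop n ^ (r + 1)) p = 0 :=
        prim_nilp (by omega : n = 2 * (k + 1) + r) hpl hprim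
      have hUg : (Uop n ^ (r + 2)) g = 0 := by
        have : (Uop n ^ (r + 1)) (Uop n g) = 0 := by
          have := congrArg (fun x => (Uop n ^ (r + 1)) x) (hfp)
          simp only [map_add] at this
          rw [hU1, hUp, zero_add] at this
          exact this.symm
        calc (Uop n ^ (r + 2)) g = (Uop n ^ (r + 1)) (Uop n g) := by
              have h1 : (Uop n ^ (r + 2)) g = Uop n ((Uop n ^ (r+1)) g) := U_pow_succ _ _
              have h2 : (Uop n ^ (r + 1)) g = ((Uop n ^ r) (Uop n g)) := by
                rw [pow_succ]; rfl
              rw [h1, h2, ← U_pow_succ]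
          _ = 0 := this
      have hg0 : g = 0 := ih (r + 2) (by omega) g hg hUg
      have hfp' : f = p := by rw [hfp, hg0, map_zero, add_zero]
      rw [hfp'] at h ⊢
      exact prim_inj (by omega : n = 2 * (k + 1) + r) hpl hprim r le_rfl h

noncomputable def Cop (n : ℕ) : Mn n ≃ₗ[ℂ] Mn n where
  toFun f S := f Sᶜ
  invFun f S := f Sᶜ
  map_add' f g := rfl
  map_smul' c f := rfl
  left_inv f := by funext S; simp
  right_inv f := by funext S; simp

lemma Cop_mem_lvl {k r : ℕ} (hn : n = k + r) {f : Mn n} (hf : f ∈ lvl n k) :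
    Cop n f ∈ lvl n r := by
  intro S hS
  refine hf Sᶜ ?_
  have := Finset.card_add_card_compl S
  rw [Fintype.card_fin] at this
  omega

lemma lvl_map_Cop {k r : ℕ} (hn : n = k + r) :
    (lvl n k).map (Cop n).toLinearMap = lvl n r := by
  ext f
  constructor
  · rintro ⟨g, hg, rfl⟩
    exact Cop_mem_lvl hn hg
  · intro hf
    refine ⟨Cop n f, Cop_mem_lvl (by omega : n = r + k) hf, ?_⟩
    funext S
    simp [Cop]

lemma finrank_lvl_eq {k r : ℕ} (hn : n = k + r) :
    Module.finrank ℂ (lvl n k) = Module.finrank ℂ (lvl n r) := by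
  rw [← lvl_map_Cop hn, LinearEquiv.finrank_map_eq]

lemma pow_U_mapsTo {k m : ℕ} : ∀ f ∈ lvl n k, (Uop n ^ m) f ∈ lvl n (k + m) :=
  fun _ hf => lvl_pow_U hf m

/-- Main surjectivity: `U^r : lvl k → lvl (k + r)` is surjective when `n = 2k + r`. -/
lemma main_surj (k r : ℕ) (hn : n = 2 * k + r) :
    ∀ h ∈ lvl n (k + r), ∃ f ∈ lvl n k, (Uop n ^ r) f = h := by
  intro h hh
  let φ : lvl n k →ₗ[ℂ] lvl n (k + r) :=
    LinearMap.restrict (Uop n ^ r) (p := lvl n k) (q := lvl n (k + r)) pow_U_mapsTo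
  have hinj : Function.Injective φ := by
    intro x y hxy
    have hxy' : (Uop n ^ r) ((x : Mn n) - y) = 0 := by
      have : (φ x : Mn n) = φ y := congrArg _ hxy
      simp only [φ, LinearMap.restrict_apply] at this
      rw [map_sub, this, sub_self]
    exact Subtype.ext (sub_eq_zero.mp (main_inj k r hn _ (sub_mem x.2 y.2) hxy'))
  have hsurj : Function.Surjective φ :=
    (LinearMap.injective_iff_surjective_of_finrank_eq_finrank
      (finrank_lvl_eq (by omega : n = k + (k + r)))).mp hinj
  obtain ⟨f, hf⟩ := hsurj ⟨h, hh⟩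
  refine ⟨f, f.2, ?_⟩
  have := congrArg (fun x : lvl n (k + r) => (x : Mn n)) hf
  simpa [φ, LinearMap.restrict_apply] using this

open MvPolynomial

noncomputable def indic (S : Finset (Fin n)) : Fin n →₀ ℕ := ∑ j ∈ S, Finsupp.single j 1

lemma indic_apply (S : Finset (Fin n)) (j : Fin n) :
    indic S j = if j ∈ S then 1 else 0 := by
  rw [indic, Finsupp.finset_sum_apply]
  simp [Finsupp.single_apply, Finset.sum_ite_eq' S j (fun _ => 1)]

lemma indic_le_one (S : Finset (Fin n)) (j : Fin n) : indic S j ≤ 1 := by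
  rw [indic_apply]; split <;> omega

lemma indic_inj {S T : Finset (Fin n)} (h : indic S = indic T) : S = T := by
  ext j
  have := congrFun (congrArg (fun d : Fin n →₀ ℕ => (d : Fin n → ℕ)) h) j
  simp only [indic_apply] at this
  by_cases hS : j ∈ S <;> by_cases hT : j ∈ T <;> simp [hS, hT] at this ⊢

lemma indic_degree (S : Finset (Fin n)) : (indic S).sum (fun _ e => e) = S.card := by
  rw [Finsupp.sum_fintype _ _ (fun _ => rfl)]
  simp only [indic_apply]
  rw [Finset.sum_ite_mem, Finset.univ_inter, Finset.card_eq_sum_ones]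

noncomputable def sqmon (S : Finset (Fin n)) : MvPolynomial (Fin n) ℂ := ∏ j ∈ S, X j

lemma indic_cons (j : Fin n) (S : Finset (Fin n)) (hj : j ∉ S) :
    indic (Finset.cons j S hj) = Finsupp.single j 1 + indic S := by
  rw [indic, Finset.sum_cons, indic]

lemma sqmon_eq_monomial (S : Finset (Fin n)) : sqmon S = monomial (indic S) 1 := by
  classical
  induction S using Finset.cons_induction with
  | empty => simp [sqmon, indic]
  | cons j S hj ih =>
      rw [sqmon, Finset.prod_cons, ← sqmon, ih, indic_cons, X, monomial_mul, one_mul]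

lemma sqmon_isHomogeneous (S : Finset (Fin n)) : (sqmon S).IsHomogeneous S.card := by
  rw [sqmon_eq_monomial]
  apply isHomogeneous_monomial
  exact indic_degree S

noncomputable def Isq (n : ℕ) : Ideal (MvPolynomial (Fin n) ℂ) :=
  Ideal.span (Set.range fun j : Fin n => X j ^ 2)

lemma monomial_mem_Isq {d : Fin n →₀ ℕ} {j : Fin n} (hj : 2 ≤ d j) (c : ℂ) :
    monomial d c ∈ Isq n := by
  have hle : Finsupp.single j 2 ≤ d := by
    rw [Finsupp.single_le_iff]; exact hj
  have : monomial d c = X j ^ 2 * monomial (d - Finsupp.single j 2) c := by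
    rw [X_pow_eq_monomial, monomial_mul, one_mul, add_tsub_cancel_of_le hle]
  rw [this]
  exact Ideal.mul_mem_right _ _ (Ideal.subset_span ⟨j, rfl⟩)

lemma coeff_eq_zero_of_mem_Isq {p : MvPolynomial (Fin n) ℂ} (hp : p ∈ Isq n)
    {d : Fin n →₀ ℕ} (hd : ∀ j, d j ≤ 1) : coeff d p = 0 := by
  revert d
  induction hp using Submodule.span_induction with
  | mem x hx =>
      intro d hd
      obtain ⟨j, rfl⟩ := hx
      show coeff d (X j ^ 2) = 0
      rw [X_pow_eq_monomial, coeff_monomial]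
      have : Finsupp.single j 2 ≠ d := by
        intro h
        have h2 := hd j
        rw [← h, Finsupp.single_apply] at h2
        simp at h2
      simp [this]
  | zero => intro d hd; simp
  | add x y _ _ hx hy => intro d hd; rw [coeff_add, hx hd, hy hd, add_zero]
  | smul r x _ hx =>
      intro d hd
      rw [smul_eq_mul, coeff_mul]
      refine Finset.sum_eq_zero fun q hq => ?_
      rw [Finset.HasAntidiagonal.mem_antidiagonal] at hq
      have hq2 : ∀ j, q.2 j ≤ 1 := by
        intro j
        have h1 := hd j
        have h2 : q.1 j + q.2 j = d j := by
          rw [← hq]; rfl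
        omega
      rw [hx hq2, mul_zero]

lemma indic_support (S : Finset (Fin n)) : (indic S).support = S := by
  ext j
  rw [Finsupp.mem_support_iff, indic_apply]
  by_cases h : j ∈ S <;> simp [h]

lemma indic_degree' (S : Finset (Fin n)) : (indic S).degree = S.card := by
  show ∑ i ∈ (indic S).support, indic S i = _
  rw [indic_support]
  rw [Finset.card_eq_sum_ones]
  refine Finset.sum_congr rfl fun j hj => ?_
  rw [indic_apply, if_pos hj]

noncomputable def polyM : Mn n →ₗ[ℂ] MvPolynomial (Fin n) ℂ where
  toFun f := ∑ S : Finset (Fin n), f S • sqmon S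
  map_add' f g := by simp [add_smul, Finset.sum_add_distrib]
  map_smul' c f := by simp [Finset.smul_sum, smul_smul]

noncomputable def sigR : MvPolynomial (Fin n) ℂ →ₗ[ℂ] Mn n where
  toFun p S := coeff (indic S) p
  map_add' p q := by funext S; simp [coeff_add]
  map_smul' c p := by funext S; simp [coeff_smul]

lemma sigR_polyM (f : Mn n) : sigR (polyM f) = f := by
  funext S
  show coeff (indic S) (∑ T : Finset (Fin n), f T • sqmon T) = f S
  rw [coeff_sum]
  rw [Finset.sum_eq_single S]
  · rw [coeff_smul, sqmon_eq_monomial, coeff_monomial, if_pos rfl, smul_eq_mul, mul_one]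
  · intro T _ hT
    rw [coeff_smul, sqmon_eq_monomial, coeff_monomial, if_neg, smul_eq_mul, mul_zero]
    exact fun h => hT (indic_inj h)
  · intro h
    exact absurd (Finset.mem_univ S) h

lemma sqfree_eq_indic {d : Fin n →₀ ℕ} (hd : ∀ j, d j ≤ 1) : d = indic d.support := by
  ext j
  rw [indic_apply]
  by_cases h : j ∈ d.support
  · rw [if_pos h]
    have := Finsupp.mem_support_iff.mp h
    have := hd j
    omega
  · rw [if_neg h]
    exact Finsupp.notMem_support_iff.mp h

lemma polyM_indicator (T : Finset (Fin n)) (c : ℂ) :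
    polyM (fun S => if S = T then c else 0) = c • sqmon T := by
  show (∑ S : Finset (Fin n), (if S = T then c else 0) • sqmon S) = c • sqmon T
  rw [Finset.sum_eq_single T]
  · rw [if_pos rfl]
  · intro S _ hS; rw [if_neg hS, zero_smul]
  · intro h; exact absurd (Finset.mem_univ T) h

lemma truncation (p : MvPolynomial (Fin n) ℂ) : p - polyM (sigR p) ∈ Isq n := by
  induction p using MvPolynomial.induction_on' with
  | add p q hp hq =>
      have : p + q - polyM (sigR (p + q)) = (p - polyM (sigR p)) + (q - polyM (sigR q)) := by
        rw [map_add, map_add]; ring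
      rw [this]
      exact Ideal.add_mem _ hp hq
  | monomial d c =>
      by_cases hd : ∀ j, d j ≤ 1
      · have hsig : sigR (monomial d c) = fun S => if S = d.support then c else 0 := by
          funext S
          show coeff (indic S) (monomial d c) = _
          rw [coeff_monomial]
          by_cases h : S = d.support
          · rw [if_pos h, if_pos (by rw [h]; exact sqfree_eq_indic hd)]
          · rw [if_neg h, if_neg]
            intro hdi
            apply h
            rw [hdi, indic_support]
        have hstep : polyM (sigR (monomial d c)) = monomial d c := by
          rw [hsig, polyM_indicator, sqmon_eq_monomial, ← sqfree_eq_indic hd, smul_monomial,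
            smul_eq_mul, mul_one]
        rw [hstep, sub_self]
        exact zero_mem _
      · push_neg at hd
        obtain ⟨j, hj⟩ := hd
        have hsig0 : sigR (monomial d c) = 0 := by
          funext S
          show coeff (indic S) (monomial d c) = 0
          rw [coeff_monomial, if_neg]
          intro hdi
          have h3 : d j = indic S j := by rw [hdi]
          have h2 := indic_le_one S j
          omega
        rw [hsig0, map_zero, sub_zero]
        exact monomial_mem_Isq (j := j) (by omega) c

noncomputable def PhiQ (n : ℕ) : Mn n →ₗ[ℂ] (MvPolynomial (Fin n) ℂ ⧸ Isq n) :=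
  (Ideal.Quotient.mkₐ ℂ (Isq n)).toLinearMap ∘ₗ polyM

lemma PhiQ_apply (f : Mn n) : PhiQ n f = Ideal.Quotient.mk (Isq n) (polyM f) := by
  rw [PhiQ, LinearMap.comp_apply]
  rfl

lemma mk_eq_PhiQ_sigR (p : MvPolynomial (Fin n) ℂ) :
    Ideal.Quotient.mk (Isq n) p = PhiQ n (sigR p) := by
  rw [PhiQ_apply]
  rw [Ideal.Quotient.mk_eq_mk_iff_sub_mem]
  exact truncation p

lemma PhiQ_inj {f : Mn n} (h : PhiQ n f = 0) : f = 0 := by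
  rw [PhiQ_apply, Ideal.Quotient.eq_zero_iff_mem] at h
  have : sigR (polyM f) = 0 := by
    funext S
    exact coeff_eq_zero_of_mem_Isq h (indic_le_one S)
  rwa [sigR_polyM] at this

lemma sigR_homog_mem_lvl {p : MvPolynomial (Fin n) ℂ} {k : ℕ} (hp : p.IsHomogeneous k) :
    sigR p ∈ lvl n k := by
  intro S hS
  show coeff (indic S) p = 0
  refine hp.coeff_eq_zero ?_
  rw [indic_degree']
  exact hS

lemma polyM_homog {f : Mn n} {k : ℕ} (hf : f ∈ lvl n k) :
    polyM f ∈ homogeneousSubmodule (Fin n) ℂ k := by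
  show (∑ S : Finset (Fin n), f S • sqmon S) ∈ homogeneousSubmodule (Fin n) ℂ k
  refine Submodule.sum_mem _ fun S _ => ?_
  rcases eq_or_ne S.card k with h | h
  · refine Submodule.smul_mem _ _ ?_
    rw [mem_homogeneousSubmodule, ← h]
    exact sqmon_isHomogeneous S
  · rw [hf S h, zero_smul]
    exact zero_mem _

lemma L_mul_sqmon (T : Finset (Fin n)) :
    (∑ j, X j : MvPolynomial (Fin n) ℂ) * sqmon T
      = (∑ j ∈ Tᶜ, sqmon (insert j T)) + ∑ j ∈ T, X j ^ 2 * sqmon (T.erase j) := by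
  rw [Finset.sum_mul]
  rw [← Finset.sum_add_sum_compl T (fun j => X j * sqmon T)]
  rw [add_comm]
  congr 1
  · refine Finset.sum_congr rfl fun j hj => ?_
    rw [Finset.mem_compl] at hj
    rw [show sqmon (insert j T) = X j * sqmon T from Finset.prod_insert hj]
  · refine Finset.sum_congr rfl fun j hj => ?_
    have : sqmon T = X j * sqmon (T.erase j) := by
      rw [sqmon, sqmon, Finset.mul_prod_erase T _ hj]
    rw [this]
    ring

lemma polyM_U (f : Mn n) :
    polyM (Uop n f) = ∑ T : Finset (Fin n), ∑ j ∈ Tᶜ, f T • sqmon (insert j T) := by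
  show (∑ S : Finset (Fin n), Uop n f S • sqmon S) = _
  have : ∀ S : Finset (Fin n), Uop n f S • sqmon S
      = ∑ j ∈ S, f (S.erase j) • sqmon S := by
    intro S
    rw [Uop_apply, Finset.sum_smul]
  simp only [this]
  have := reindex (n := n) (fun T j => f T • sqmon (insert j T))
  rw [← this]
  refine Finset.sum_congr rfl fun S _ => Finset.sum_congr rfl fun j hj => ?_
  rw [Finset.insert_erase hj]

lemma mkL_mul_PhiQ (f : Mn n) :
    Ideal.Quotient.mk (Isq n) (∑ j, X j) * PhiQ n f = PhiQ n (Uop n f) := by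
  rw [PhiQ_apply, PhiQ_apply, ← map_mul]
  rw [Ideal.Quotient.mk_eq_mk_iff_sub_mem]
  have hmul : (∑ j, X j : MvPolynomial (Fin n) ℂ) * polyM f
      = ∑ T : Finset (Fin n), (f T • ((∑ j ∈ Tᶜ, sqmon (insert j T))
          + ∑ j ∈ T, X j ^ 2 * sqmon (T.erase j))) := by
    show (∑ j, X j : MvPolynomial (Fin n) ℂ) * (∑ T : Finset (Fin n), f T • sqmon T) = _
    rw [Finset.mul_sum]
    refine Finset.sum_congr rfl fun T _ => ?_
    rw [mul_smul_comm, L_mul_sqmon]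
  rw [hmul, polyM_U]
  have : (∑ T : Finset (Fin n), (f T • ((∑ j ∈ Tᶜ, sqmon (insert j T))
          + ∑ j ∈ T, X j ^ 2 * sqmon (T.erase j))))
      - (∑ T : Finset (Fin n), ∑ j ∈ Tᶜ, f T • sqmon (insert j T))
      = ∑ T : Finset (Fin n), f T • (∑ j ∈ T, X j ^ 2 * sqmon (T.erase j)) := by
    rw [← Finset.sum_sub_distrib]
    refine Finset.sum_congr rfl fun T _ => ?_
    rw [smul_add, Finset.smul_sum]
    ring
  rw [this]
  refine Submodule.sum_mem _ fun T _ => ?_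
  rw [smul_eq_C_mul]
  refine Ideal.mul_mem_left _ _ (Submodule.sum_mem _ fun j hj => ?_)
  exact Ideal.mul_mem_right _ _ (Ideal.subset_span ⟨j, rfl⟩)

lemma mkL_pow_mul_PhiQ (m : ℕ) (f : Mn n) :
    Ideal.Quotient.mk (Isq n) (∑ j, X j) ^ m * PhiQ n f = PhiQ n ((Uop n ^ m) f) := by
  induction m with
  | zero => simp
  | succ m ih =>
      rw [pow_succ, mul_comm (Ideal.Quotient.mk (Isq n) (∑ j, X j) ^ m) _, mul_assoc, ih,
        mkL_mul_PhiQ, ← U_pow_succ]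

lemma quotDeg_eq (k : ℕ) : quotDeg (Isq n) k = (lvl n k).map (PhiQ n) := by
  ext x
  constructor
  · rintro ⟨p, hp, rfl⟩
    refine ⟨sigR p, sigR_homog_mem_lvl hp, ?_⟩
    have : (Ideal.Quotient.mkₐ ℂ (Isq n)).toLinearMap p = Ideal.Quotient.mk (Isq n) p := rfl
    rw [this, mk_eq_PhiQ_sigR]
  · rintro ⟨f, hf, rfl⟩
    exact ⟨polyM f, polyM_homog hf, rfl⟩

theorem stmt8 (n : ℕ) :
    ∀ i ≤ n / 2,
      lefschetzAt
        (Ideal.span (Set.range fun j : Fin n => (X j : MvPolynomial (Fin n) ℂ) ^ 2))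
        n (∑ j, X j) i := by
  intro i hi
  have h2i : 2 * i ≤ n := by
    have := (Nat.le_div_iff_mul_le (by norm_num : 0 < 2)).mp hi
    omega
  show lefschetzAt (Isq n) n (∑ j, X j) i
  constructor
  · intro x hx hLx
    rw [quotDeg_eq] at hx
    obtain ⟨f, hf, rfl⟩ := hx
    rw [mkL_pow_mul_PhiQ] at hLx
    have hU : (Uop n ^ (n - 2 * i)) f = 0 := PhiQ_inj hLx
    have hf0 : f = 0 := main_inj i (n - 2 * i) (by omega) f hf hU
    rw [hf0, map_zero]
  · intro y hy
    rw [quotDeg_eq] at hy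
    obtain ⟨g, hg, rfl⟩ := hy
    have hg' : g ∈ lvl n (i + (n - 2 * i)) := by
      have h : n - i = i + (n - 2 * i) := by omega
      rwa [h] at hg
    obtain ⟨f, hf, hUf⟩ := main_surj i (n - 2 * i) (by omega) g hg'
    refine ⟨PhiQ n f, ?_, ?_⟩
    · rw [quotDeg_eq]
      exact ⟨f, hf, rfl⟩
    · rw [mkL_pow_mul_PhiQ, hUf]
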